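/- Let R be a commutative Noetherian ring and M a finitely generated R-module with transpose Tr(M). Then M is reflexive (i.e. the canonical map M → M** is bijective) if and only if Ext^1_R(Tr(M), R) = 0 and Ext^2_R(Tr(M), R) = 0. -/

import Mathlib

noncomputable section

set_option maxHeartbeats 1000000
set_option synthInstance.maxHeartbeats 1000000

open CategoryTheory Opposite

/-- `Ext^n_R(M, N)` as a type (vanishing is expressed by `Subsingleton`). -/
abbrev extM (R : Type) [CommRing R] (M N : Type) [AddCommGroup M] [Module R M]
    [AddCommGroup N] [Module R N] (n : ℕ) : Type :=
  ((Ext R (ModuleCat R) n).obj (op (ModuleCat.of R M))).obj (ModuleCat.of R N)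

namespace AuslanderBridgerAux

open Function LinearMap Module CategoryTheory Limits

variable {R : Type} [CommRing R]

/-- Factorization of a linear map through a surjective linear map with smaller kernel. -/
lemma exists_factor {A B C : Type} [AddCommGroup A] [Module R A] [AddCommGroup B] [Module R B]
    [AddCommGroup C] [Module R C] {p : A →ₗ[R] B} (hp : Surjective p) {f : A →ₗ[R] C}
    (h : ker p ≤ ker f) : ∃ g : B →ₗ[R] C, g ∘ₗ p = f := by
  refine ⟨((ker p).liftQ f h).comp
    ((p.quotKerEquivOfSurjective hp).symm : B →ₗ[R] (A ⧸ ker p)), ?_⟩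
  ext a
  have h1 : (p.quotKerEquivOfSurjective hp).symm (p a) = Submodule.Quotient.mk a := by
    rw [LinearEquiv.symm_apply_eq]
    simp [LinearMap.quotKerEquivOfSurjective, LinearMap.quotKerEquivRange_apply_mk]
  simp [LinearMap.comp_apply, h1]

variable {M : Type} [AddCommGroup M] [Module R M] {m n : ℕ}
  (φ : (Fin m → R) →ₗ[R] (Fin n → R)) (π : (Fin n → R) →ₗ[R] M)

lemma range_dualMap_eq_ker (hπ : Surjective π) (hker : ker π = range φ) :
    range π.dualMap = ker φ.dualMap := by
  apply le_antisymm
  · rintro _ ⟨g, rfl⟩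
    rw [mem_ker]
    refine LinearMap.ext fun x => ?_
    have hx : π (φ x) = 0 := by
      have : φ x ∈ ker π := by rw [hker]; exact mem_range_self φ x
      simpa using this
    simp [LinearMap.dualMap_apply, hx]
  · intro u hu
    rw [mem_ker] at hu
    have hle : ker π ≤ ker u := by
      rw [hker]
      rintro _ ⟨x, rfl⟩
      have := congrFun (congrArg (fun (v : _ →ₗ[R] R) => (v : _ → R)) hu) x
      simpa using this
    obtain ⟨g, hg⟩ := exists_factor hπ hle
    exact ⟨g, by ext y; simp [← hg]⟩

lemma dualMap_inj (hπ : Surjective π) : Injective π.dualMap := by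
  intro g₁ g₂ h
  ext x
  obtain ⟨y, rfl⟩ := hπ x
  have := congrFun (congrArg (fun (v : _ →ₗ[R] R) => (v : _ → R)) h) y
  simpa using this

/-- Exactness condition in degree 1 of the dualized resolution is equivalent to
injectivity of the biduality map. -/
lemma lemA {P2 : Type} [AddCommGroup P2] [Module R P2]
    (d2 : P2 →ₗ[R] Module.Dual R (Fin n → R))
    (hd2 : range d2 = ker φ.dualMap) (hπ : Surjective π) (hker : ker π = range φ) :
    (∀ f : Module.Dual R (Fin n → R) →ₗ[R] R, f ∘ₗ d2 = 0 →
       ∃ g : Module.Dual R (Fin m → R) →ₗ[R] R, f = g ∘ₗ φ.dualMap) ↔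
    Injective (Module.Dual.eval R M) := by
  constructor
  · intro hC
    rw [← LinearMap.ker_eq_bot, eq_bot_iff]
    intro x hx
    rw [mem_ker] at hx
    obtain ⟨y, rfl⟩ := hπ x
    have hf : (Module.Dual.eval R (Fin n → R) y) ∘ₗ d2 = 0 := by
      ext z
      have hz : d2 z ∈ range π.dualMap := by
        rw [range_dualMap_eq_ker φ π hπ hker, ← hd2]
        exact mem_range_self _ z
      obtain ⟨g, hg⟩ := hz
      have h0 : g (π y) = 0 := by
        have := congrFun (congrArg (fun (v : Module.Dual R (Module.Dual R M)) =>
          (v : Module.Dual R M → R)) hx) g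
        simpa [Module.Dual.eval_apply] using this
      simp [← hg, Module.Dual.eval_apply, LinearMap.dualMap_apply, h0]
    obtain ⟨g, hg⟩ := hC (Module.Dual.eval R (Fin n → R) y) hf
    obtain ⟨z, hz⟩ := (Module.bijective_dual_eval R (Fin m → R)).2 g
    have hyz : y = φ z := by
      apply (Module.bijective_dual_eval R (Fin n → R)).1
      ext u
      have := congrFun (congrArg (fun (v : Module.Dual R (Fin n → R) →ₗ[R] R) =>
        (v : Module.Dual R (Fin n → R) → R)) hg) u
      simp only [Module.Dual.eval_apply, LinearMap.comp_apply] at this ⊢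
      rw [this, ← hz]
      simp [Module.Dual.eval_apply, LinearMap.dualMap_apply]
    rw [hyz]
    have : φ z ∈ ker π := by rw [hker]; exact mem_range_self φ z
    simpa using this
  · intro hinj f hf
    obtain ⟨y, hy⟩ := (Module.bijective_dual_eval R (Fin n → R)).2 f
    have hy0 : Module.Dual.eval R M (π y) = 0 := by
      ext g
      have hmem : π.dualMap g ∈ range d2 := by
        rw [hd2, ← range_dualMap_eq_ker φ π hπ hker]
        exact mem_range_self _ g
      obtain ⟨z, hz⟩ := hmem
      have h1 : f (d2 z) = 0 := by
        have := congrFun (congrArg (fun (v : P2 →ₗ[R] R) => (v : P2 → R)) hf) z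
        simpa using this
      have h2 : f (π.dualMap g) = g (π y) := by
        rw [← hy]
        simp [Module.Dual.eval_apply, LinearMap.dualMap_apply]
      rw [hz] at h1
      simp [Module.Dual.eval_apply]
      rw [← h2, h1]
    have hπy : π y = 0 := by
      apply hinj
      rw [hy0]
      simp
    have : y ∈ range φ := by rw [← hker]; simpa using hπy
    obtain ⟨z, rfl⟩ := this
    refine ⟨Module.Dual.eval R (Fin m → R) z, ?_⟩
    ext u
    simp [← hy, Module.Dual.eval_apply, LinearMap.dualMap_apply]

/-- Exactness condition in degree 2 of the dualized resolution is equivalent to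
surjectivity of the biduality map. -/
lemma lemB {P2 P3 : Type} [AddCommGroup P2] [Module R P2] [AddCommGroup P3] [Module R P3]
    (d2 : P2 →ₗ[R] Module.Dual R (Fin n → R)) (d3 : P3 →ₗ[R] P2)
    (hd2 : range d2 = ker φ.dualMap) (hd3 : range d3 = ker d2)
    (hπ : Surjective π) (hker : ker π = range φ) :
    (∀ f : P2 →ₗ[R] R, f ∘ₗ d3 = 0 →
       ∃ g : Module.Dual R (Fin n → R) →ₗ[R] R, f = g ∘ₗ d2) ↔
    Surjective (Module.Dual.eval R M) := by
  have hinj : Injective π.dualMap := dualMap_inj π hπ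
  have hrange : ∀ z : P2, d2 z ∈ range π.dualMap := by
    intro z
    rw [range_dualMap_eq_ker φ π hπ hker, ← hd2]
    exact mem_range_self _ z
  set e : Module.Dual R M ≃ₗ[R] range π.dualMap := LinearEquiv.ofInjective π.dualMap hinj with he
  set ρ : P2 →ₗ[R] Module.Dual R M :=
    (e.symm : (range π.dualMap : Submodule R _) →ₗ[R] Module.Dual R M) ∘ₗ
      (d2.codRestrict (range π.dualMap) hrange) with hρ
  have key : ∀ z : P2, π.dualMap (ρ z) = d2 z := by
    intro z
    have h1 : e (ρ z) = d2.codRestrict (range π.dualMap) hrange z := by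
      simp [hρ, LinearMap.comp_apply]
    have h2 : (e (ρ z) : Module.Dual R (Fin n → R)) = π.dualMap (ρ z) := by
      simp [he, LinearEquiv.ofInjective_apply]
    rw [← h2, h1]
    rfl
  have hsurjρ : Surjective ρ := by
    intro g
    have : π.dualMap g ∈ range d2 := by
      rw [hd2, ← range_dualMap_eq_ker φ π hπ hker]
      exact mem_range_self _ g
    obtain ⟨z, hz⟩ := this
    exact ⟨z, hinj (by rw [key z, hz])⟩
  constructor
  · intro hC h
    set f : P2 →ₗ[R] R := h ∘ₗ ρ with hfdef
    have hf : f ∘ₗ d3 = 0 := by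
      ext w
      have : d3 w ∈ ker d2 := by rw [← hd3]; exact mem_range_self _ w
      rw [mem_ker] at this
      have hρ0 : ρ (d3 w) = 0 := hinj (by rw [key, this]; simp)
      simp [hfdef, LinearMap.comp_apply, hρ0]
    obtain ⟨g, hg⟩ := hC f hf
    obtain ⟨y, hy⟩ := (Module.bijective_dual_eval R (Fin n → R)).2 g
    refine ⟨π y, ?_⟩
    ext u
    have : π.dualMap u ∈ range d2 := by
      rw [hd2, ← range_dualMap_eq_ker φ π hπ hker]
      exact mem_range_self _ u
    obtain ⟨z, hz⟩ := this
    have h241 : ρ z = u := hinj (by rw [key z, hz])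
    have h5 : g (d2 z) = f z := by
      have := congrFun (congrArg (fun (v : P2 →ₗ[R] R) => (v : P2 → R)) hg) z
      simpa using this.symm
    calc Module.Dual.eval R M (π y) u = u (π y) := by simp [Module.Dual.eval_apply]
      _ = (π.dualMap u) y := rfl
      _ = g (π.dualMap u) := by rw [← hy]; simp [Module.Dual.eval_apply]
      _ = g (d2 z) := by rw [hz]
      _ = f z := h5
      _ = h (ρ z) := rfl
      _ = h u := by rw [h241]
  · intro hsurj f hf
    have hkerle : ker ρ ≤ ker f := by
      intro z hz
      rw [mem_ker] at hz
      have hz2 : d2 z = 0 := by rw [← key z, hz]; simp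
      have : z ∈ range d3 := by rw [hd3]; exact mem_ker.mpr hz2
      obtain ⟨w, rfl⟩ := this
      have := congrFun (congrArg (fun (v : P3 →ₗ[R] R) => (v : P3 → R)) hf) w
      simpa using this
    obtain ⟨h, hh⟩ := exists_factor hsurjρ hkerle
    obtain ⟨x, hx⟩ := hsurj h
    obtain ⟨y, rfl⟩ := hπ x
    refine ⟨Module.Dual.eval R (Fin n → R) y, ?_⟩
    ext z
    have h1 : f z = h (ρ z) := by
      have := congrFun (congrArg (fun (v : P2 →ₗ[R] R) => (v : P2 → R)) hh) z
      simpa using this.symm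
    have h2 : h (ρ z) = (ρ z) (π y) := by
      rw [← hx]
      simp [Module.Dual.eval_apply]
    calc f z = (ρ z) (π y) := by rw [h1, h2]
      _ = (π.dualMap (ρ z)) y := rfl
      _ = (d2 z) y := by rw [key z]
      _ = (Module.Dual.eval R (Fin n → R) y ∘ₗ d2) z := by
          simp [Module.Dual.eval_apply]


section Categorical

variable (R : Type) [CommRing R] {m n : ℕ} (φ : (Fin m → R) →ₗ[R] (Fin n → R))

instance proj0 : Projective (ModuleCat.of R (Module.Dual R (Fin m → R))) :=
  (IsProjective.iff_projective _).mp inferInstance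

/-- The beginning of an explicit projective resolution of the transpose. -/
def myComplex : ChainComplex (ModuleCat R) ℕ :=
  ChainComplex.mk' (ModuleCat.of R (Module.Dual R (Fin m → R)))
    (ModuleCat.of R (Module.Dual R (Fin n → R)))
    (ModuleCat.ofHom φ.dualMap)
    (fun {X₀ X₁} f => ⟨Projective.syzygies f, Projective.d f, by
      show (Projective.π _ ≫ kernel.ι f) ≫ f = 0
      rw [Category.assoc, kernel.condition, Limits.comp_zero]⟩)

lemma myComplex_d_1_0 : (myComplex R φ).d 1 0 = ModuleCat.ofHom φ.dualMap := by
  simp [myComplex]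

instance myComplex_projective (i : ℕ) : Projective ((myComplex R φ).X i) := by
  obtain (_ | _ | _ | i) := i
  · exact proj0 R
  · exact proj0 R
  · apply Projective.projective_over
  · apply Projective.projective_over

lemma myComplex_exactAt_succ (i : ℕ) : (myComplex R φ).ExactAt (i + 1) := by
  rw [HomologicalComplex.exactAt_iff' _ (i + 1 + 1) (i + 1) i (by simp) (by simp)]
  let e : (myComplex R φ).X (i + 2) ≅ _ := ChainComplex.mk'XIso _ _ _ _ i
  have hd : (myComplex R φ).d (i + 2) (i + 1) =
      e.hom ≫ Projective.d ((myComplex R φ).d (i + 1) i) := ChainComplex.mk'_d _ _ _ _ i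
  refine ShortComplex.exact_of_iso ?_ (exact_d_f ((myComplex R φ).d (i + 1) i))
  refine ShortComplex.isoMk e.symm (Iso.refl _) (Iso.refl _) ?_ ?_
  · show e.inv ≫ (myComplex R φ).d (i + 2) (i + 1) = Projective.d _ ≫ 𝟙 _
    rw [hd]
    exact (Iso.inv_hom_id_assoc e _).trans (Category.comp_id _).symm
  · exact (Category.id_comp _).trans (Category.comp_id _).symm

/-- The explicit projective resolution of the transpose. -/
def myRes : ProjectiveResolution
    (ModuleCat.of R (Module.Dual R (Fin m → R) ⧸ LinearMap.range φ.dualMap)) where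
  complex := myComplex R φ
  π := (ChainComplex.toSingle₀Equiv _ _).symm
    ⟨ModuleCat.ofHom (LinearMap.range φ.dualMap).mkQ, by
      rw [myComplex_d_1_0]
      refine ModuleCat.hom_ext (LinearMap.ext fun x => ?_)
      show (LinearMap.range φ.dualMap).mkQ (φ.dualMap x) = 0
      simp only [Submodule.mkQ_apply, Submodule.Quotient.mk_eq_zero]
      exact LinearMap.mem_range_self _ x⟩
  quasiIso := ⟨fun i => by
    cases i with
    | zero =>
      rw [ChainComplex.quasiIsoAt₀_iff, ShortComplex.quasiIso_iff_of_zeros']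
      · have hmk : ModuleCat.ofHom φ.dualMap ≫
            ModuleCat.ofHom (LinearMap.range φ.dualMap).mkQ = 0 := by
          refine ModuleCat.hom_ext (LinearMap.ext fun x => ?_)
          show (LinearMap.range φ.dualMap).mkQ (φ.dualMap x) = 0
          simp only [Submodule.mkQ_apply, Submodule.Quotient.mk_eq_zero]
          exact LinearMap.mem_range_self _ x
        refine (ShortComplex.exact_and_epi_g_iff_of_iso
          (ShortComplex.isoMk (Iso.refl _) (Iso.refl _) (Iso.refl _) ?_ ?_ :
            _ ≅ ShortComplex.mk (ModuleCat.ofHom φ.dualMap)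
              (ModuleCat.ofHom (LinearMap.range φ.dualMap).mkQ) hmk)).2 ⟨?_, ?_⟩
        · simp [myComplex]
        · simp
        · rw [ShortComplex.moduleCat_exact_iff]
          intro x hx
          have hx' : x ∈ LinearMap.range φ.dualMap := by
            rw [← Submodule.Quotient.mk_eq_zero]
            exact hx
          obtain ⟨y, hy⟩ := hx'
          exact ⟨y, hy⟩
        · exact (ModuleCat.epi_iff_surjective _).2 (Submodule.mkQ_surjective _)
      all_goals rfl
    | succ i =>
      rw [quasiIsoAt_iff_exactAt']
      · apply myComplex_exactAt_succ
      · apply ChainComplex.exactAt_succ_single_obj⟩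

end Categorical

end AuslanderBridgerAux


/-- Over a commutative Noetherian ring, a finitely generated module `M` with finite free
presentation `G →φ F → M → 0` is reflexive if and only if
`Ext^1_R(Tr M, R) = 0` and `Ext^2_R(Tr M, R) = 0`, where `Tr M = Coker φ*`. -/
theorem stmt2 (R : Type) [CommRing R] [IsNoetherianRing R]
    (M : Type) [AddCommGroup M] [Module R M] [Module.Finite R M]
    (m n : ℕ) (φ : (Fin m → R) →ₗ[R] (Fin n → R))
    (π : (Fin n → R) →ₗ[R] M) (hπ : Function.Surjective π)
    (hker : LinearMap.ker π = LinearMap.range φ) :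
    Function.Bijective (Module.Dual.eval R M) ↔
      (Subsingleton (extM R (Module.Dual R (Fin m → R) ⧸ LinearMap.range φ.dualMap) R 1) ∧
       Subsingleton (extM R (Module.Dual R (Fin m → R) ⧸ LinearMap.range φ.dualMap) R 2)) := by
  classical
  let Y : ModuleCat R := ModuleCat.of R R
  let P : CategoryTheory.ProjectiveResolution
      (ModuleCat.of R (Module.Dual R (Fin m → R) ⧸ LinearMap.range φ.dualMap)) :=
    AuslanderBridgerAux.myRes R φ
  let C := P.complex.linearYonedaObj R Y
  -- Step 1: subsingleton of Ext iff exactness of the dualized complex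
  have key : ∀ i : ℕ,
      Subsingleton (extM R (Module.Dual R (Fin m → R) ⧸ LinearMap.range φ.dualMap) R i)
        ↔ C.ExactAt i := by
    intro i
    have e : extM R (Module.Dual R (Fin m → R) ⧸ LinearMap.range φ.dualMap) R i ≃ₗ[R]
        C.homology i := (P.isoExt i Y).toLinearEquiv
    rw [HomologicalComplex.exactAt_iff_isZero_homology]
    constructor
    · intro hs
      have : Subsingleton (C.homology i) := e.toEquiv.symm.subsingleton
      exact ModuleCat.isZero_of_subsingleton _
    · intro hz
      have h0 : (𝟙 (C.homology i) : C.homology i ⟶ C.homology i) = 0 :=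
        (CategoryTheory.Limits.IsZero.iff_id_eq_zero _).mp hz
      have hsub : Subsingleton (C.homology i) := by
        refine ⟨fun a b => ?_⟩
        have ha : a = 0 := by
          have := congrFun (congrArg
            (fun (v : C.homology i ⟶ C.homology i) => (v : C.homology i → C.homology i)) h0) a
          simpa using this
        have hb : b = 0 := by
          have := congrFun (congrArg
            (fun (v : C.homology i ⟶ C.homology i) => (v : C.homology i → C.homology i)) h0) b
          simpa using this
        rw [ha, hb]
      exact e.toEquiv.subsingleton
  -- Step 2: the relevant differentials of the resolution
  let P2 : ModuleCat R := (AuslanderBridgerAux.myComplex R φ).X 2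
  let P3 : ModuleCat R := (AuslanderBridgerAux.myComplex R φ).X 3
  let d2 : ↑P2 →ₗ[R] Module.Dual R (Fin n → R) := ((AuslanderBridgerAux.myComplex R φ).d 2 1).hom
  let d3 : ↑P3 →ₗ[R] ↑P2 := ((AuslanderBridgerAux.myComplex R φ).d 3 2).hom
  have hranged2 : LinearMap.range d2 = LinearMap.ker φ.dualMap := by
    apply le_antisymm
    · rintro _ ⟨z, rfl⟩
      rw [LinearMap.mem_ker]
      have h2 := (AuslanderBridgerAux.myComplex R φ).d_comp_d 2 1 0
      rw [AuslanderBridgerAux.myComplex_d_1_0 R φ] at h2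
      have := DFunLike.congr_fun (ModuleCat.hom_ext_iff.mp h2) z
      exact this
    · intro u hu
      have hex := AuslanderBridgerAux.myComplex_exactAt_succ R φ 0
      rw [HomologicalComplex.exactAt_iff' _ 2 1 0 (by simp) (by simp),
        ShortComplex.moduleCat_exact_iff] at hex
      obtain ⟨z, hz⟩ := hex u (by
        show ((AuslanderBridgerAux.myComplex R φ).d 1 0) u = 0
        rw [AuslanderBridgerAux.myComplex_d_1_0 R φ]
        exact hu)
      exact ⟨z, hz⟩
  have hranged3 : LinearMap.range d3 = LinearMap.ker d2 := by
    apply le_antisymm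
    · rintro _ ⟨z, rfl⟩
      rw [LinearMap.mem_ker]
      have h2 := (AuslanderBridgerAux.myComplex R φ).d_comp_d 3 2 1
      have := DFunLike.congr_fun (ModuleCat.hom_ext_iff.mp h2) z
      exact this
    · intro u hu
      have hex := AuslanderBridgerAux.myComplex_exactAt_succ R φ 1
      rw [HomologicalComplex.exactAt_iff' _ 3 2 1 (by simp) (by simp),
        ShortComplex.moduleCat_exact_iff] at hex
      obtain ⟨z, hz⟩ := hex u hu
      exact ⟨z, hz⟩
  -- Step 3: exactness of the dual complex in degrees 1 and 2
  have hE1 : C.ExactAt 1 ↔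
      (∀ f : Module.Dual R (Fin n → R) →ₗ[R] R, f ∘ₗ d2 = 0 →
        ∃ g : Module.Dual R (Fin m → R) →ₗ[R] R, f = g ∘ₗ φ.dualMap) := by
    rw [HomologicalComplex.exactAt_iff' C 0 1 2 (by simp) (by simp),
      ShortComplex.moduleCat_exact_iff]
    constructor
    · intro h f hf
      obtain ⟨g, hg⟩ := h (ModuleCat.ofHom f) (by
        show (AuslanderBridgerAux.myComplex R φ).d 2 1 ≫ ModuleCat.ofHom f = 0
        ext z; exact LinearMap.congr_fun hf z)
      refine ⟨g.hom, ?_⟩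
      have hg' : (AuslanderBridgerAux.myComplex R φ).d 1 0 ≫ g = ModuleCat.ofHom f := hg
      rw [AuslanderBridgerAux.myComplex_d_1_0] at hg'
      rw [← ModuleCat.hom_ofHom f, ← hg']
      rfl
    · intro h f hf
      have hf' : (AuslanderBridgerAux.myComplex R φ).d 2 1 ≫ f = 0 := hf
      obtain ⟨g, hg⟩ := h f.hom (by
        ext z; exact DFunLike.congr_fun (ModuleCat.hom_ext_iff.mp hf') z)
      refine ⟨ModuleCat.ofHom g, ?_⟩
      show (AuslanderBridgerAux.myComplex R φ).d 1 0 ≫ ModuleCat.ofHom g = f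
      rw [AuslanderBridgerAux.myComplex_d_1_0]
      ext x; exact (LinearMap.congr_fun hg x).symm
  have hE2 : C.ExactAt 2 ↔
      (∀ f : ↑P2 →ₗ[R] R, f ∘ₗ d3 = 0 →
        ∃ g : Module.Dual R (Fin n → R) →ₗ[R] R, f = g ∘ₗ d2) := by
    rw [HomologicalComplex.exactAt_iff' C 1 2 3 (by simp) (by simp),
      ShortComplex.moduleCat_exact_iff]
    constructor
    · intro h f hf
      obtain ⟨g, hg⟩ := h (ModuleCat.ofHom f) (by
        show (AuslanderBridgerAux.myComplex R φ).d 3 2 ≫ ModuleCat.ofHom f = 0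
        ext z; exact LinearMap.congr_fun hf z)
      refine ⟨g.hom, ?_⟩
      have hg' : (AuslanderBridgerAux.myComplex R φ).d 2 1 ≫ g = ModuleCat.ofHom f := hg
      rw [← ModuleCat.hom_ofHom f, ← hg']
      rfl
    · intro h f hf
      have hf' : (AuslanderBridgerAux.myComplex R φ).d 3 2 ≫ f = 0 := hf
      obtain ⟨g, hg⟩ := h f.hom (by
        ext z; exact DFunLike.congr_fun (ModuleCat.hom_ext_iff.mp hf') z)
      refine ⟨ModuleCat.ofHom g, ?_⟩
      show (AuslanderBridgerAux.myComplex R φ).d 2 1 ≫ ModuleCat.ofHom g = f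
      ext x; exact (LinearMap.congr_fun hg x).symm
  have A := AuslanderBridgerAux.lemA φ π d2 hranged2 hπ hker
  have B := AuslanderBridgerAux.lemB φ π d2 d3 hranged2 hranged3 hπ hker
  constructor
  · intro hbij
    exact ⟨(key 1).mpr (hE1.mpr (A.mpr hbij.1)), (key 2).mpr (hE2.mpr (B.mpr hbij.2))⟩
  · rintro ⟨h1, h2⟩
    exact ⟨A.mp (hE1.mp ((key 1).mp h1)), B.mp (hE2.mp ((key 2).mp h2))⟩
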